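/- Let Γ be a finite group with representation G : Γ → GL(c,ℂ), B ∈ Mat^Γ, and suppose Mat_{c×c} = T_BΣ + V where T_BΣ = {[B,y] : y ∈ Mat_{c×c}} and V = span{v₁,...,v_p}. Let π be the averaging projection onto Mat^Γ. Then Mat^Γ = T_BΣ^Γ + span{π(v₁),...,π(v_p)}, where T_BΣ^Γ = {[B,y] : y ∈ Mat^Γ}. -/

import Mathlib

noncomputable def avg {Γ : Type*} [Group Γ] [Fintype Γ] {c : ℕ}
    (G : Γ →* Matrix.GeneralLinearGroup (Fin c) ℂ)
    (M : Matrix (Fin c) (Fin c) ℂ) : Matrix (Fin c) (Fin c) ℂ :=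
  (Fintype.card Γ : ℂ)⁻¹ • ∑ γ : Γ,
    (G γ : Matrix (Fin c) (Fin c) ℂ) * M * (((G γ)⁻¹ : Matrix.GeneralLinearGroup (Fin c) ℂ) : Matrix (Fin c) (Fin c) ℂ)

section aux
variable {Γ : Type*} [Group Γ] [Fintype Γ] {c : ℕ}
  (G : Γ →* Matrix.GeneralLinearGroup (Fin c) ℂ)

lemma avg_commutes (M : Matrix (Fin c) (Fin c) ℂ) (γ₀ : Γ) :
    (G γ₀ : Matrix (Fin c) (Fin c) ℂ) * avg G M = avg G M * (G γ₀ : Matrix (Fin c) (Fin c) ℂ) := by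
  unfold avg
  rw [mul_smul_comm, smul_mul_assoc, Finset.mul_sum, Finset.sum_mul]
  congr 1
  apply Fintype.sum_bijective (fun δ => γ₀ * δ) (Group.mulLeft_bijective γ₀)
  intro δ
  rw [map_mul]
  simp only [mul_inv_rev, Units.val_mul, mul_assoc, Units.inv_mul_cancel_left]
  rw [Units.inv_mul, mul_one]

lemma avg_fixed (X : Matrix (Fin c) (Fin c) ℂ)
    (hX : ∀ γ : Γ, (G γ : Matrix (Fin c) (Fin c) ℂ) * X = X * (G γ : Matrix (Fin c) (Fin c) ℂ)) :
    avg G X = X := by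
  unfold avg
  have : ∀ γ : Γ, (G γ : Matrix (Fin c) (Fin c) ℂ) * X *
      (((G γ)⁻¹ : Matrix.GeneralLinearGroup (Fin c) ℂ) : Matrix (Fin c) (Fin c) ℂ) = X := by
    intro γ
    rw [hX γ, mul_assoc, Units.mul_inv, mul_one]
  rw [Finset.sum_congr rfl (fun γ _ => this γ), Finset.sum_const, Finset.card_univ,
    ← Nat.cast_smul_eq_nsmul ℂ, smul_smul, inv_mul_cancel₀, one_smul]
  exact_mod_cast Fintype.card_ne_zero

lemma avg_add (X Y : Matrix (Fin c) (Fin c) ℂ) : avg G (X + Y) = avg G X + avg G Y := by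
  unfold avg
  rw [← smul_add, ← Finset.sum_add_distrib]
  congr 1; apply Finset.sum_congr rfl; intro γ _; noncomm_ring

lemma avg_smul (a : ℂ) (X : Matrix (Fin c) (Fin c) ℂ) : avg G (a • X) = a • avg G X := by
  unfold avg
  rw [smul_comm a ((Fintype.card Γ : ℂ)⁻¹)]
  congr 1
  rw [Finset.smul_sum]
  exact Finset.sum_congr rfl fun γ _ => by rw [mul_smul_comm, smul_mul_assoc]

lemma avg_sum {p : ℕ} (f : Fin p → Matrix (Fin c) (Fin c) ℂ) :
    avg G (∑ i, f i) = ∑ i, avg G (f i) := by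
  induction p with
  | zero => simp [avg]
  | succ n ih =>
    rw [Fin.sum_univ_succ, avg_add, ih, Fin.sum_univ_succ]

variable (B : Matrix (Fin c) (Fin c) ℂ)
    (hB : ∀ γ : Γ, (G γ : Matrix (Fin c) (Fin c) ℂ) * B = B * (G γ : Matrix (Fin c) (Fin c) ℂ))

include hB

lemma hBinv (γ : Γ) :
    B * (((G γ)⁻¹ : Matrix.GeneralLinearGroup (Fin c) ℂ) : Matrix (Fin c) (Fin c) ℂ)
      = (((G γ)⁻¹ : Matrix.GeneralLinearGroup (Fin c) ℂ) : Matrix (Fin c) (Fin c) ℂ) * B := by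
  have h := congrArg (fun X => (((G γ)⁻¹ : Matrix.GeneralLinearGroup (Fin c) ℂ) : Matrix (Fin c) (Fin c) ℂ)
    * X * (((G γ)⁻¹ : Matrix.GeneralLinearGroup (Fin c) ℂ) : Matrix (Fin c) (Fin c) ℂ)) (hB γ)
  simp only [mul_assoc, Units.inv_mul_cancel_left, Units.mul_inv, mul_one] at h
  exact h

lemma avg_bracket (y : Matrix (Fin c) (Fin c) ℂ) :
    avg G (B * y - y * B) = B * avg G y - avg G y * B := by
  unfold avg
  rw [mul_smul_comm, smul_mul_assoc, ← smul_sub, Finset.mul_sum, Finset.sum_mul,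
    ← Finset.sum_sub_distrib]
  congr 1; apply Finset.sum_congr rfl; intro γ _
  rw [mul_sub, sub_mul]
  congr 1
  · simp only [← mul_assoc]; rw [hB γ]
  · simp only [mul_assoc]; rw [hBinv G B hB γ]

end aux

theorem stmt17 {Γ : Type*} [Group Γ] [Fintype Γ] {c p : ℕ}
    (G : Γ →* Matrix.GeneralLinearGroup (Fin c) ℂ)
    (B : Matrix (Fin c) (Fin c) ℂ)
    (hB : ∀ γ : Γ, (G γ : Matrix (Fin c) (Fin c) ℂ) * B = B * (G γ : Matrix (Fin c) (Fin c) ℂ))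
    (v : Fin p → Matrix (Fin c) (Fin c) ℂ)
    (hspan : ∀ X : Matrix (Fin c) (Fin c) ℂ, ∃ y : Matrix (Fin c) (Fin c) ℂ, ∃ a : Fin p → ℂ,
      X = (B * y - y * B) + ∑ i, a i • v i) :
    {X : Matrix (Fin c) (Fin c) ℂ |
        ∀ γ : Γ, (G γ : Matrix (Fin c) (Fin c) ℂ) * X = X * (G γ : Matrix (Fin c) (Fin c) ℂ)} =
      {X | ∃ y : Matrix (Fin c) (Fin c) ℂ,
        (∀ γ : Γ, (G γ : Matrix (Fin c) (Fin c) ℂ) * y = y * (G γ : Matrix (Fin c) (Fin c) ℂ)) ∧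
        ∃ a : Fin p → ℂ, X = (B * y - y * B) + ∑ i, a i • avg G (v i)} := by
  ext X
  simp only [Set.mem_setOf_eq]
  constructor
  · intro hX
    obtain ⟨y, a, hXy⟩ := hspan X
    refine ⟨avg G y, fun γ => avg_commutes G y γ, a, ?_⟩
    calc X = avg G X := (avg_fixed G X hX).symm
      _ = avg G ((B * y - y * B) + ∑ i, a i • v i) := by rw [← hXy]
      _ = avg G (B * y - y * B) + avg G (∑ i, a i • v i) := avg_add G _ _
      _ = (B * avg G y - avg G y * B) + ∑ i, a i • avg G (v i) := by
          rw [avg_bracket G B hB, avg_sum]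
          congr 1
          exact Finset.sum_congr rfl fun i _ => avg_smul G (a i) (v i)
  · rintro ⟨y, hy, a, rfl⟩
    intro γ
    have hbr : (G γ : Matrix (Fin c) (Fin c) ℂ) * (B * y - y * B)
        = (B * y - y * B) * (G γ : Matrix (Fin c) (Fin c) ℂ) := by
      calc (G γ : Matrix (Fin c) (Fin c) ℂ) * (B * y - y * B)
          = ((G γ : Matrix (Fin c) (Fin c) ℂ) * B) * y
            - ((G γ : Matrix (Fin c) (Fin c) ℂ) * y) * B := by noncomm_ring
        _ = (B * (G γ : Matrix (Fin c) (Fin c) ℂ)) * y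
            - (y * (G γ : Matrix (Fin c) (Fin c) ℂ)) * B := by rw [hB γ, hy γ]
        _ = B * ((G γ : Matrix (Fin c) (Fin c) ℂ) * y)
            - y * ((G γ : Matrix (Fin c) (Fin c) ℂ) * B) := by noncomm_ring
        _ = B * (y * (G γ : Matrix (Fin c) (Fin c) ℂ))
            - y * (B * (G γ : Matrix (Fin c) (Fin c) ℂ)) := by rw [hB γ, hy γ]
        _ = (B * y - y * B) * (G γ : Matrix (Fin c) (Fin c) ℂ) := by noncomm_ring
    rw [mul_add, add_mul, hbr, Finset.mul_sum, Finset.sum_mul]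
    congr 1
    apply Finset.sum_congr rfl
    intro i _
    rw [mul_smul_comm, smul_mul_assoc, avg_commutes G (v i) γ]
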